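/- For every n ≥ 2 there exists an order embedding φ : (Δⁿ, ⊑) → (Ωⁿ, ⊑) (x ⊑ y iff φ(x) ⊑ φ(y)) such that σ(φ(x)) = μ(x) for all x ∈ Δⁿ, where μ is Shannon entropy and σ is von Neumann entropy. -/

import Mathlib

open scoped ComplexOrder Matrix

/-- Δⁿ : classical n-states. -/
def IsClassicalState (n : ℕ) (x : Fin n → ℝ) : Prop :=
  (∀ i, 0 ≤ x i) ∧ ∑ i, x i = 1

def ClState (n : ℕ) := {x : Fin n → ℝ // IsClassicalState n x}

/-- The Bayesian order (symmetric characterization). -/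
def bayesLE {n : ℕ} (x y : Fin n → ℝ) : Prop :=
  ∃ σ : Equiv.Perm (Fin n),
    Antitone (fun i => x (σ i)) ∧ Antitone (fun i => y (σ i)) ∧
    ∀ i j : Fin n, (i : ℕ) + 1 = (j : ℕ) →
      x (σ i) * y (σ j) ≤ x (σ j) * y (σ i)

def clLE {n : ℕ} (x y : ClState n) : Prop := bayesLE x.val y.val

/-- Ωⁿ : density matrices on ℂⁿ. -/
def IsDensityMatrix (n : ℕ) (ρ : Matrix (Fin n) (Fin n) ℂ) : Prop :=
  ρ.PosSemidef ∧ ρ.trace = 1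

def QState (n : ℕ) := {ρ : Matrix (Fin n) (Fin n) ℂ // IsDensityMatrix n ρ}

/-- The spectral order on density matrices. -/
def specLE {n : ℕ} (ρ σ : Matrix (Fin n) (Fin n) ℂ) : Prop :=
  ∃ U : Matrix (Fin n) (Fin n) ℂ, U ∈ Matrix.unitaryGroup (Fin n) ℂ ∧
    (Uᴴ * ρ * U).IsDiag ∧ (Uᴴ * σ * U).IsDiag ∧
    bayesLE (fun i => ((Uᴴ * ρ * U) i i).re) (fun i => ((Uᴴ * σ * U) i i).re)

def qLE {n : ℕ} (ρ σ : QState n) : Prop := specLE ρ.val σ.val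

/-- Shannon entropy (with the convention 0 · ln 0 = 0, as `Real.log 0 = 0`). -/
noncomputable def shannonEntropy {n : ℕ} (x : ClState n) : ℝ :=
  -∑ i, x.val i * Real.log (x.val i)

/-- von Neumann entropy: −∑ λᵢ ln λᵢ, λᵢ the eigenvalues of ρ. -/
noncomputable def vnEntropy {n : ℕ} (ρ : QState n) : ℝ :=
  -∑ i, ρ.prop.1.1.eigenvalues i * Real.log (ρ.prop.1.1.eigenvalues i)

lemma exists_perm_ne_zero {n : ℕ} (U : Matrix (Fin n) (Fin n) ℂ) (hU : IsUnit U.det) :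
    ∃ π : Equiv.Perm (Fin n), ∀ j, U (π j) j ≠ 0 := by
  by_contra h
  push_neg at h
  have hz : U.det = 0 := by
    rw [Matrix.det_apply]
    refine Finset.sum_eq_zero fun σ _ => ?_
    obtain ⟨j, hj⟩ := h σ
    have : ∏ i, U (σ i) i = 0 := Finset.prod_eq_zero (Finset.mem_univ j) hj
    rw [this, smul_zero]
  rw [hz] at hU
  exact not_isUnit_zero hU

lemma diag_entry {n : ℕ} (U M : Matrix (Fin n) (Fin n) ℂ) (x : Fin n → ℂ)
    (h : Matrix.diagonal x * U = U * M) (hM : M.IsDiag) (i j : Fin n) (hij : U i j ≠ 0) :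
    M j j = x i := by
  have h1 := congrFun (congrFun h i) j
  have hL : (Matrix.diagonal x * U) i j = x i * U i j := by
    simp [Matrix.mul_apply, Matrix.diagonal_apply]
  have hR : (U * M) i j = U i j * M j j := by
    rw [Matrix.mul_apply]
    rw [Finset.sum_eq_single j]
    · intro k _ hk
      rw [hM hk, mul_zero]
    · intro hk; exact absurd (Finset.mem_univ j) hk
  rw [hL, hR, mul_comm (x i)] at h1
  exact (mul_left_cancel₀ hij h1).symm

lemma bayesLE_comp {n : ℕ} (x y : Fin n → ℝ) (π : Equiv.Perm (Fin n))
    (h : bayesLE (fun j => x (π j)) (fun j => y (π j))) : bayesLE x y := by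
  obtain ⟨σ, h1, h2, h3⟩ := h
  exact ⟨σ.trans π, h1, h2, h3⟩

lemma eig_diag {n : ℕ} (x : Fin n → ℝ)
    (hH : (Matrix.diagonal (fun i => (x i : ℂ))).IsHermitian) :
    ∃ π : Equiv.Perm (Fin n), ∀ j, hH.eigenvalues j = x (π j) := by
  set V : Matrix (Fin n) (Fin n) ℂ := (hH.eigenvectorUnitary : Matrix (Fin n) (Fin n) ℂ)
  have hVmem : V ∈ Matrix.unitaryGroup (Fin n) ℂ := hH.eigenvectorUnitary.2
  have hV1 : V * Vᴴ = 1 := by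
    have := Matrix.mem_unitaryGroup_iff.mp hVmem
    rwa [Matrix.star_eq_conjTranspose] at this
  have hV2 : Vᴴ * V = 1 := by
    have := Matrix.mem_unitaryGroup_iff'.mp hVmem
    rwa [Matrix.star_eq_conjTranspose] at this
  set L : Matrix (Fin n) (Fin n) ℂ :=
    Matrix.diagonal (RCLike.ofReal ∘ hH.eigenvalues)
  have heq : Matrix.diagonal (fun i => (x i : ℂ)) * V = V * L := by
    conv_lhs => rw [hH.spectral_theorem]
    rw [Unitary.conjStarAlgAut_apply]
    change V * L * star V * V = V * L
    rw [Matrix.star_eq_conjTranspose, mul_assoc, hV2, mul_one]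
  have hdet : IsUnit V.det := Matrix.isUnit_det_of_right_inverse hV1
  obtain ⟨π, hπ⟩ := exists_perm_ne_zero V hdet
  refine ⟨π, fun j => ?_⟩
  have := diag_entry V L _ heq (Matrix.isDiag_diagonal _) (π j) j (hπ j)
  simp only [L, Matrix.diagonal_apply_eq, Function.comp_apply] at this
  exact RCLike.ofReal_injective (K := ℂ) this

lemma vn_eq {n : ℕ} (x : Fin n → ℝ)
    (hH : (Matrix.diagonal (fun i => (x i : ℂ))).IsHermitian) :
    -∑ i, hH.eigenvalues i * Real.log (hH.eigenvalues i)
      = -∑ i, x i * Real.log (x i) := by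
  obtain ⟨π, hπ⟩ := eig_diag x hH
  congr 1
  rw [← Equiv.sum_comp π (fun i => x i * Real.log (x i))]
  exact Finset.sum_congr rfl fun j _ => by rw [hπ j]

theorem classical_embeds_in_quantum (n : ℕ) (hn : 2 ≤ n) :
    ∃ φ : ClState n → QState n,
      (∀ x y : ClState n, clLE x y ↔ qLE (φ x) (φ y)) ∧
      (∀ x : ClState n, vnEntropy (φ x) = shannonEntropy x) := by
  refine ⟨fun x => ⟨Matrix.diagonal (fun i => (x.val i : ℂ)),
    Matrix.posSemidef_diagonal_iff.mpr fun i => by simpa using x.prop.1 i, ?_⟩, ?_, ?_⟩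
  · rw [Matrix.trace_diagonal, ← Complex.ofReal_sum, x.prop.2, Complex.ofReal_one]
  · intro x y
    constructor
    · intro hxy
      refine ⟨1, Submonoid.one_mem _, ?_, ?_, ?_⟩
      · simpa using Matrix.isDiag_diagonal (fun i => (x.val i : ℂ))
      · simpa using Matrix.isDiag_diagonal (fun i => (y.val i : ℂ))
      · simpa [clLE] using hxy
    · rintro ⟨U, hU, hdx, hdy, hb⟩
      have hU1 : U * Uᴴ = 1 := by
        have := Matrix.mem_unitaryGroup_iff.mp hU
        rwa [Matrix.star_eq_conjTranspose] at this
      have hdet : IsUnit U.det := Matrix.isUnit_det_of_right_inverse hU1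
      obtain ⟨π, hπ⟩ := exists_perm_ne_zero U hdet
      have key : ∀ z : Fin n → ℝ,
          (Uᴴ * Matrix.diagonal (fun i => (z i : ℂ)) * U).IsDiag →
          (fun i => ((Uᴴ * Matrix.diagonal (fun i => (z i : ℂ)) * U) i i).re)
            = fun i => z (π i) := by
        intro z hd
        have heq : Matrix.diagonal (fun i => (z i : ℂ)) * U
            = U * (Uᴴ * Matrix.diagonal (fun i => (z i : ℂ)) * U) := by
          rw [← mul_assoc, ← mul_assoc, hU1, one_mul]
        funext j
        rw [diag_entry U _ _ heq hd (π j) j (hπ j)]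
        exact Complex.ofReal_re _
      rw [key x.val hdx, key y.val hdy] at hb
      exact bayesLE_comp _ _ π hb
  · intro x
    simp only [vnEntropy, shannonEntropy]
    exact vn_eq x.val _
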